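/- Let n ≥ 1, I ⊂ ℝ a closed interval with pairwise distinct points x₁,…,xₙ ∈ I. Suppose f₁,…,fₙ ∈ C^{n-1}(I) and A_{ij} ≥ 0 satisfy |f_j^{(i-1)}(x)/(i-1)!| ≤ A_{ij} for all 1 ≤ i,j ≤ n and x ∈ I. Then |det(f_j(x_i))_{i,j}| ≤ (∏_{i>j} |x_i - x_j|) · Σ_{σ ∈ S_n} ∏_{i=1}^n A_{i,σ(i)}. -/

import Mathlib

open Set Finset Polynomial

lemma contDiff_polyeval (P : ℝ[X]) (m : WithTop ℕ∞) : ContDiff ℝ m fun t => P.eval t := by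
  induction P using Polynomial.induction_on' with
  | add p q hp hq => simpa [Polynomial.eval_add] using hp.add hq
  | monomial k c =>
    simpa [Polynomial.eval_monomial] using (contDiff_const (c := c)).mul (contDiff_id.pow k)

lemma polyIDW {a b : ℝ} (hab : a < b) (P : ℝ[X]) (m : ℕ) :
    ∀ y ∈ Icc a b,
      iteratedDerivWithin m (fun t => P.eval t) (Icc a b) y = (derivative^[m] P).eval y := by
  induction m with
  | zero => intro y hy; simp
  | succ m ih =>
    intro y hy
    rw [iteratedDerivWithin_succ,
      derivWithin_congr ih (ih y hy), Function.iterate_succ_apply']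
    exact ((Polynomial.hasDerivAt (derivative^[m] P) y).hasDerivWithinAt.derivWithin
      ((uniqueDiffOn_Icc hab) y hy))

lemma iterRolle {a b : ℝ} (hab : a < b) :
    ∀ (k : ℕ) (g : ℝ → ℝ), ContDiffOn ℝ k g (Icc a b) →
    ∀ z : Fin (k+1) → ℝ, StrictMono z → (∀ i, z i ∈ Icc a b) → (∀ i, g (z i) = 0) →
    ∃ ξ ∈ Icc a b, iteratedDerivWithin k g (Icc a b) ξ = 0 := by
  intro k
  induction k with
  | zero =>
    intro g _ z _ hzm hz0
    exact ⟨z 0, hzm 0, by simpa using hz0 0⟩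
  | succ k IH =>
    intro g hg z hzs hzm hz0
    have hud := uniqueDiffOn_Icc hab
    have key : ∀ i : Fin (k+1), ∃ c ∈ Ioo (z i.castSucc) (z i.succ),
        derivWithin g (Icc a b) c = 0 := by
      intro i
      have hlt : z i.castSucc < z i.succ := hzs (Fin.castSucc_lt_succ (i := i))
      obtain ⟨c, hc, hc0⟩ := exists_deriv_eq_zero hlt
        (hg.continuousOn.mono (Icc_subset_Icc (hzm i.castSucc).1 (hzm i.succ).2))
        ((hz0 i.castSucc).trans (hz0 i.succ).symm)
      refine ⟨c, hc, ?_⟩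
      rw [derivWithin_of_mem_nhds (Icc_mem_nhds (lt_of_le_of_lt (hzm i.castSucc).1 hc.1)
        (lt_of_lt_of_le hc.2 (hzm i.succ).2))]
      exact hc0
    choose w hw1 hw2 using key
    have hwm : ∀ i, w i ∈ Icc a b := fun i =>
      ⟨le_of_lt (lt_of_le_of_lt (hzm i.castSucc).1 (hw1 i).1),
       le_of_lt (lt_of_lt_of_le (hw1 i).2 (hzm i.succ).2)⟩
    have hws : StrictMono w := by
      rw [Fin.strictMono_iff_lt_succ]
      intro i
      calc w i.castSucc < z i.castSucc.succ := (hw1 i.castSucc).2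
        _ = z i.succ.castSucc := by rw [Fin.succ_castSucc]
        _ < w i.succ := (hw1 i.succ).1
    obtain ⟨ξ, hξm, hξ⟩ := IH (derivWithin g (Icc a b))
      (hg.derivWithin hud (by exact_mod_cast le_refl ((k:ℕ∞)+1))) w hws hwm hw2
    refine ⟨ξ, hξm, ?_⟩
    rw [iteratedDerivWithin_succ']
    exact hξ

lemma coeff_bound {a b : ℝ} (hab : a < b) {n : ℕ} (x : Fin n → ℝ)
    (hx : ∀ i, x i ∈ Icc a b) (hxdist : Function.Injective x)
    (g : ℝ → ℝ) (k : Fin n) (hg : ContDiffOn ℝ (k : ℕ) g (Icc a b))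
    (c : Fin n → ℝ)
    (hc : ∀ i : Fin n, i ≤ k → g (x i) =
      ∑ l ∈ univ.filter (fun l => l ≤ k), c l * ∏ m ∈ univ.filter (fun m => m < l), (x i - x m)) :
    ∃ ξ ∈ Icc a b, iteratedDerivWithin (k : ℕ) g (Icc a b) ξ = (Nat.factorial k) * c k := by
  classical
  have hud := uniqueDiffOn_Icc hab
  set P : ℝ[X] := ∑ l ∈ univ.filter (fun l => l ≤ k),
    C (c l) * ∏ m ∈ univ.filter (fun m => m < l), (X - C (x m)) with hP
  have hMdeg : ∀ l : Fin n,
      (∏ m ∈ univ.filter (fun m => m < l), (X - C (x m))).natDegree = (l : ℕ) := by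
    intro l
    rw [Polynomial.natDegree_prod _ _ (fun m _ => X_sub_C_ne_zero (x m))]
    simp only [natDegree_X_sub_C]
    rw [Finset.sum_const, smul_eq_mul, mul_one]
    have : univ.filter (fun m : Fin n => m < l) = Finset.Iio l := by
      ext m; simp
    rw [this, Fin.card_Iio]
  have hPdeg : P.natDegree ≤ (k : ℕ) := by
    refine natDegree_sum_le_of_forall_le _ _ (fun l hl => ?_)
    refine (natDegree_C_mul_le _ _).trans ?_
    rw [hMdeg l]
    exact (mem_filter.mp hl).2
  have hPcoeff : P.coeff k = c k := by
    rw [hP, finset_sum_coeff]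
    rw [Finset.sum_eq_single k]
    · have hmon : (∏ m ∈ univ.filter (fun m => m < k), (X - C (x m))).Monic :=
        monic_prod_of_monic _ _ fun m _ => monic_X_sub_C (x m)
      have := hmon.coeff_natDegree
      rw [hMdeg k] at this
      rw [coeff_C_mul, this, mul_one]
    · intro l hl hlk
      have hlt : (l : ℕ) < (k : ℕ) :=
        lt_of_le_of_ne ((mem_filter.mp hl).2) (fun h => hlk (Fin.ext h))
      exact Polynomial.coeff_eq_zero_of_natDegree_lt
        (lt_of_le_of_lt ((natDegree_C_mul_le _ _).trans_eq (hMdeg l)) hlt)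
    · intro hk
      exact absurd (mem_filter.mpr ⟨mem_univ k, le_refl k⟩ :
        k ∈ univ.filter (fun l => l ≤ k)) hk
  have hPeval : ∀ i : Fin n, i ≤ k → P.eval (x i) = g (x i) := by
    intro i hik
    rw [hc i hik, hP, eval_finset_sum]
    exact Finset.sum_congr rfl fun l _ => by simp [eval_prod]
  set G : ℝ → ℝ := g - fun t => P.eval t with hG
  have hGcd : ContDiffOn ℝ (k : ℕ) G (Icc a b) :=
    hg.sub ((contDiff_polyeval P _).contDiffOn)
  set e : Fin ((k : ℕ) + 1) → Fin n :=
    (fun i => ⟨i, by have := i.2; have := k.2; omega⟩) with he'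
  have hek : ∀ i, e i ≤ k := by
    intro i
    rw [Fin.le_def]
    exact Nat.lt_succ_iff.mp i.2
  have hyinj : Function.Injective (x ∘ e) := by
    refine hxdist.comp ?_
    intro i1 i2 h12
    have h13 : ((e i1 : Fin n) : ℕ) = ((e i2 : Fin n) : ℕ) := congrArg Fin.val h12
    exact Fin.ext h13
  set z : Fin ((k : ℕ) + 1) → ℝ := (x ∘ e) ∘ Tuple.sort (x ∘ e) with hz
  have hzs : StrictMono z :=
    (Tuple.monotone_sort (x ∘ e)).strictMono_of_injective
      (hyinj.comp (Tuple.sort (x ∘ e)).injective)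
  have hz0 : ∀ i, G (z i) = 0 := by
    intro i
    have : G (x (e (Tuple.sort (x ∘ e) i))) = 0 := by
      rw [hG]
      simp only [Pi.sub_apply]
      rw [hPeval _ (hek _)]
      ring
    simpa [hz] using this
  obtain ⟨ξ, hξm, hξ⟩ := iterRolle hab (k : ℕ) G hGcd z hzs (fun i => hx _) hz0
  refine ⟨ξ, hξm, ?_⟩
  have hsub : iteratedDerivWithin (k : ℕ) G (Icc a b) ξ =
      iteratedDerivWithin (k : ℕ) g (Icc a b) ξ -
        iteratedDerivWithin (k : ℕ) (fun t => P.eval t) (Icc a b) ξ :=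
    iteratedDerivWithin_sub hξm hud (hg.contDiffWithinAt hξm) ((contDiff_polyeval P _).contDiffOn.contDiffWithinAt hξm)
  have hpoly : iteratedDerivWithin (k : ℕ) (fun t => P.eval t) (Icc a b) ξ =
      (Nat.factorial k) * c k := by
    rw [polyIDW hab P (k : ℕ) ξ hξm]
    have hdeg0 : (derivative^[(k : ℕ)] P).natDegree = 0 := by
      have := Polynomial.natDegree_iterate_derivative P (k : ℕ)
      omega
    obtain ⟨r, hr⟩ := Polynomial.natDegree_eq_zero.mp hdeg0
    have hr0 : r = (derivative^[(k : ℕ)] P).coeff 0 := by rw [← hr]; simp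
    rw [← hr, eval_C, hr0, Polynomial.coeff_iterate_derivative, zero_add,
      Nat.descFactorial_self, hPcoeff, nsmul_eq_mul]
  rw [hsub, hpoly] at hξ
  linarith

/-- The key determinant bound of the Bombieri–Pila method. -/
theorem stmt_1 (n : ℕ) (hn : 1 ≤ n) (a b : ℝ) (hab : a < b)
    (x : Fin n → ℝ) (hx : ∀ i, x i ∈ Icc a b) (hxdist : Function.Injective x)
    (f : Fin n → ℝ → ℝ) (hf : ∀ j, ContDiffOn ℝ (n - 1 : ℕ) (f j) (Icc a b))
    (A : Fin n → Fin n → ℝ) (hA : ∀ i j, 0 ≤ A i j)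
    (hbound : ∀ i j : Fin n, ∀ y ∈ Icc a b,
      |iteratedDerivWithin (i : ℕ) (f j) (Icc a b) y / (Nat.factorial i : ℝ)| ≤ A i j) :
    |Matrix.det (Matrix.of fun i j : Fin n => f j (x i))| ≤
      (∏ i : Fin n, ∏ j ∈ Finset.univ.filter (fun j : Fin n => j < i), |x i - x j|) *
        ∑ σ : Equiv.Perm (Fin n), ∏ i : Fin n, A i (σ i) := by
  classical
  set N : Matrix (Fin n) (Fin n) ℝ :=
    Matrix.of (fun i l : Fin n => ∏ m ∈ univ.filter (fun m => m < l), (x i - x m)) with hNdef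
  have hNtri : ∀ i l : Fin n, i < l → N i l = 0 := by
    intro i l hil
    show (∏ m ∈ univ.filter (fun m => m < l), (x i - x m)) = 0
    exact Finset.prod_eq_zero (mem_filter.mpr ⟨mem_univ i, hil⟩) (sub_self _)
  have hNdet : N.det = ∏ i, N i i :=
    Matrix.det_of_lowerTriangular N (fun i l h => hNtri i l (by exact h))
  have hNdet0 : N.det ≠ 0 := by
    rw [hNdet]
    refine Finset.prod_ne_zero_iff.mpr fun i _ => ?_
    show (∏ m ∈ univ.filter (fun m => m < i), (x i - x m)) ≠ 0
    refine Finset.prod_ne_zero_iff.mpr fun m hm => ?_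
    exact sub_ne_zero.mpr fun hxx => (ne_of_gt (mem_filter.mp hm).2) (hxdist hxx)
  have hNunit : IsUnit N.det := isUnit_iff_ne_zero.mpr hNdet0
  set F : Matrix (Fin n) (Fin n) ℝ := Matrix.of (fun i j : Fin n => f j (x i)) with hFdef
  set D : Matrix (Fin n) (Fin n) ℝ := N⁻¹ * F with hDdef
  have hND : N * D = F := by
    rw [hDdef, ← Matrix.mul_assoc, Matrix.mul_nonsing_inv _ hNunit, Matrix.one_mul]
  have hentry : ∀ i j : Fin n, f j (x i) = ∑ l, N i l * D l j := by
    intro i j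
    have h := congrFun (congrFun hND i) j
    rw [Matrix.mul_apply] at h
    exact h.symm
  have hDb : ∀ kk j : Fin n, |D kk j| ≤ A kk j := by
    intro kk j
    have hg : ContDiffOn ℝ (kk : ℕ) (f j) (Icc a b) := by
      refine (hf j).of_le ?_
      have h1 : (kk : ℕ) ≤ n - 1 := by have := kk.2; omega
      exact_mod_cast Nat.cast_le.mpr h1
    have hc : ∀ i : Fin n, i ≤ kk → f j (x i) =
        ∑ l ∈ univ.filter (fun l => l ≤ kk),
          D l j * ∏ m ∈ univ.filter (fun m => m < l), (x i - x m) := by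
      intro i hik
      calc f j (x i) = ∑ l, N i l * D l j := hentry i j
        _ = ∑ l ∈ univ.filter (fun l => l ≤ kk), N i l * D l j := by
            refine (Finset.sum_subset (filter_subset _ _) (fun l _ hl => ?_)).symm
            have hkl : kk < l := lt_of_not_ge fun h => hl (mem_filter.mpr ⟨mem_univ l, h⟩)
            rw [hNtri i l (lt_of_le_of_lt hik hkl), zero_mul]
        _ = ∑ l ∈ univ.filter (fun l => l ≤ kk),
              D l j * ∏ m ∈ univ.filter (fun m => m < l), (x i - x m) :=
            Finset.sum_congr rfl fun l _ => mul_comm _ _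
    obtain ⟨ξ, hξm, hξ⟩ := coeff_bound hab x hx hxdist (f j) kk hg (fun l => D l j) hc
    have hb := hbound kk j ξ hξm
    rw [hξ] at hb
    have hfac : ((Nat.factorial kk : ℝ)) ≠ 0 :=
      Nat.cast_ne_zero.mpr (Nat.factorial_ne_zero _)
    rwa [mul_comm, mul_div_assoc, div_self hfac, mul_one] at hb
  have hdetF : F.det = N.det * D.det := by rw [← hND, Matrix.det_mul]
  have habsN : |N.det| = ∏ i : Fin n,
      ∏ j ∈ Finset.univ.filter (fun j : Fin n => j < i), |x i - x j| := by
    rw [hNdet, Finset.abs_prod]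
    refine Finset.prod_congr rfl fun i _ => ?_
    show |∏ m ∈ univ.filter (fun m => m < i), (x i - x m)| = _
    exact Finset.abs_prod _ _
  have habsD : |D.det| ≤ ∑ σ : Equiv.Perm (Fin n), ∏ i : Fin n, A i (σ i) := by
    rw [Matrix.det_apply]
    refine (Finset.abs_sum_le_sum_abs _ _).trans ?_
    have h1 : ∀ σ : Equiv.Perm (Fin n),
        |Equiv.Perm.sign σ • ∏ i, D (σ i) i| = ∏ i, |D (σ i) i| := by
      intro σ
      rcases Int.units_eq_one_or (Equiv.Perm.sign σ) with h | h <;>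
        rw [h] <;> simp [Finset.abs_prod]
    calc ∑ σ : Equiv.Perm (Fin n), |Equiv.Perm.sign σ • ∏ i, D (σ i) i|
        = ∑ σ : Equiv.Perm (Fin n), ∏ i, |D (σ i) i| := Finset.sum_congr rfl fun σ _ => h1 σ
      _ ≤ ∑ σ : Equiv.Perm (Fin n), ∏ i, A (σ i) i :=
          Finset.sum_le_sum fun σ _ => Finset.prod_le_prod
            (fun i _ => abs_nonneg _) (fun i _ => hDb (σ i) i)
      _ = ∑ σ : Equiv.Perm (Fin n), ∏ i, A i (σ i) := by
          refine Fintype.sum_equiv (Equiv.inv (Equiv.Perm (Fin n)))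
            (fun σ => ∏ i, A (σ i) i) (fun σ => ∏ i, A i (σ i)) fun σ => ?_
          have := Equiv.prod_comp σ (fun i => A i (σ⁻¹ i))
          simpa using this
  have hgoal : |F.det| ≤ (∏ i : Fin n,
      ∏ j ∈ Finset.univ.filter (fun j : Fin n => j < i), |x i - x j|) *
        ∑ σ : Equiv.Perm (Fin n), ∏ i : Fin n, A i (σ i) := by
    rw [hdetF, abs_mul, habsN]
    exact mul_le_mul_of_nonneg_left habsD
      (Finset.prod_nonneg fun i _ => Finset.prod_nonneg fun m _ => abs_nonneg _)
  exact hgoal
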